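/- arXiv:1708.01219 — 3 statements merged into one kernel-verified Lean document; each statement's English description precedes it below -/
import Mathlib

section
/- Let G be a symmetric 2×2 integer matrix which is positive definite (vᵀGv > 0 for every nonzero integer vector v) and whose diagonal entries G₀₀ and G₁₁ are even. Then there exists exactly one triple of integers (a,b,c) with 0 < a ≤ c, 0 ≤ 2b ≤ a, a even and c even, such that some integer matrix M with det M = ±1 satisfies Mᵀ G M = [[a, b], [b, c]]. -/
private lemma hexagon (m n : ℤ) (hm : 0 ≤ m) (hn : 0 ≤ n) (h : 1 ≤ m + n) :
    1 ≤ m^2 - m*n + n^2 := by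
  rcases le_or_gt 1 m with hm1 | hm1
  · nlinarith [sq_nonneg (m - n)]
  · have : 1 ≤ n := by omega
    nlinarith [sq_nonneg (m - n)]

private lemma L1 (a b c x y : ℤ) (ha : 0 < a) (hac : a ≤ c) (hb0 : 0 ≤ b)
    (hba : 2*b ≤ a) (hv : ¬(x = 0 ∧ y = 0)) :
    a ≤ a*x^2 + 2*b*x*y + c*y^2 := by
  have hx := abs_nonneg x
  have hy := abs_nonneg y
  have h1 : 1 ≤ |x| + |y| := by
    rcases Classical.em (x = 0) with rfl | hx0
    · have hy0 : y ≠ 0 := by tauto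
      have := abs_pos.mpr hy0; omega
    · have := abs_pos.mpr hx0; omega
  have hhex := hexagon |x| |y| hx hy h1
  have hxy : -(|x| * |y|) ≤ x * y := by
    have := neg_abs_le (x * y)
    rw [abs_mul] at this; linarith
  have hsx : |x|^2 = x^2 := sq_abs x
  have hsy : |y|^2 = y^2 := sq_abs y
  nlinarith [mul_nonneg (mul_nonneg hx hy) (by linarith : (0:ℤ) ≤ a - 2*b),
    mul_nonneg (sq_nonneg y) (by linarith : (0:ℤ) ≤ c - a)]

private lemma L2 (a b c x y : ℤ) (ha : 0 < a) (hac : a ≤ c) (hb0 : 0 ≤ b)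
    (hba : 2*b ≤ a) (hy0 : y ≠ 0) :
    c ≤ a*x^2 + 2*b*x*y + c*y^2 := by
  have hx := abs_nonneg x
  have hy : 1 ≤ |y| := abs_pos.mpr hy0
  have hhex := hexagon |x| |y| hx (by omega) (by omega)
  have hxy : -(|x| * |y|) ≤ x * y := by
    have := neg_abs_le (x * y)
    rw [abs_mul] at this; linarith
  have hsx : |x|^2 = x^2 := sq_abs x
  have hsy : |y|^2 = y^2 := sq_abs y
  nlinarith [mul_nonneg (mul_nonneg hx (by omega : (0:ℤ) ≤ |y|)) (by linarith : (0:ℤ) ≤ a - 2*b),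
    mul_nonneg (by nlinarith : (0:ℤ) ≤ y^2 - 1) (by linarith : (0:ℤ) ≤ c - a)]

private lemma mk_eq (a1 a2 a3 a4 b1 b2 b3 b4 : ℤ) (h1 : a1 = b1) (h2 : a2 = b2)
    (h3 : a3 = b3) (h4 : a4 = b4) : !![a1,a2;a3,a4] = !![b1,b2;b3,b4] := by
  subst h1; subst h2; subst h3; subst h4; rfl

private lemma transform (A B C p q r s : ℤ) :
    (!![p,r;q,s]).transpose * !![A,B;B,C] * !![p,r;q,s] =
      !![A*p^2+2*B*p*q+C*q^2, A*p*r+B*(p*s+q*r)+C*q*s; A*p*r+B*(p*s+q*r)+C*q*s, A*r^2+2*B*r*s+C*s^2] := by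
  ext i j
  fin_cases i <;> fin_cases j <;>
    simp [Matrix.mul_apply, Fin.sum_univ_two, Matrix.transpose_apply, Matrix.vecHead, Matrix.vecTail] <;> ring

private lemma compose_rel (R S T X Y : Matrix (Fin 2) (Fin 2) ℤ)
    (h : X.transpose * R * X = S) (h' : Y.transpose * S * Y = T) :
    (X * Y).transpose * R * (X * Y) = T := by
  rw [Matrix.transpose_mul, ← h', ← h]
  noncomm_ring

private lemma inv_rel (R R' N : Matrix (Fin 2) (Fin 2) ℤ)
    (hdet : N.det = 1 ∨ N.det = -1) (h : N.transpose * R * N = R') :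
    ∃ N' : Matrix (Fin 2) (Fin 2) ℤ, (N'.det = 1 ∨ N'.det = -1) ∧
      N'.transpose * R' * N' = R := by
  have hu : IsUnit N.det := by
    rcases hdet with h1 | h1 <;> rw [h1]
    · exact isUnit_one
    · exact isUnit_one.neg
  have h1 : N * N⁻¹ = 1 := Matrix.mul_nonsing_inv N hu
  have hd : N.det * N⁻¹.det = 1 := by rw [← Matrix.det_mul, h1, Matrix.det_one]
  refine ⟨N⁻¹, by rcases hdet with h2 | h2 <;> rw [h2] at hd <;> omega, ?_⟩
  rw [← h]
  simp only [Matrix.mul_assoc]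
  rw [h1, Matrix.mul_one, ← Matrix.mul_assoc, ← Matrix.transpose_mul, h1,
    Matrix.transpose_one, Matrix.one_mul]

private lemma qf_eq (A B C x y : ℤ) :
    dotProduct ![x,y] ((!![A,B;B,C]).mulVec ![x,y]) = A*x^2+2*B*x*y+C*y^2 := by
  simp [Matrix.mulVec, dotProduct, Fin.sum_univ_two, Matrix.vecHead, Matrix.vecTail]
  ring

private lemma even_val (A B C x y : ℤ) (hA : Even A) (hC : Even C) :
    Even (A*x^2+2*B*x*y+C*y^2) := by
  obtain ⟨A₁, hA₁⟩ := hA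
  obtain ⟨C₁, hC₁⟩ := hC
  exact ⟨A₁*x^2+B*x*y+C₁*y^2, by rw [hA₁, hC₁]; ring⟩

private lemma exists_reduced (A B C : ℤ)
    (pd : ∀ x y : ℤ, ¬(x = 0 ∧ y = 0) → 0 < A*x^2+2*B*x*y+C*y^2) :
    ∃ a b c : ℤ, 0 < a ∧ a ≤ c ∧ 0 ≤ b ∧ 2*b ≤ a ∧
      (∃ x y : ℤ, A*x^2+2*B*x*y+C*y^2 = a) ∧
      (∃ x y : ℤ, A*x^2+2*B*x*y+C*y^2 = c) ∧
      ∃ M : Matrix (Fin 2) (Fin 2) ℤ, (M.det = 1 ∨ M.det = -1) ∧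
        M.transpose * !![A,B;B,C] * M = !![a,b;b,c] := by
  obtain ⟨a, ⟨⟨p, q, hpq, hpqa⟩, hmin⟩⟩ :=
    Int.exists_least_of_bdd (P := fun z => ∃ x y : ℤ, ¬(x = 0 ∧ y = 0) ∧ A*x^2+2*B*x*y+C*y^2 = z)
      ⟨1, fun z ⟨x, y, h, hz⟩ => hz ▸ pd x y h⟩
      ⟨A, 1, 0, by norm_num, by ring⟩
  have ha : 0 < a := hpqa ▸ pd p q hpq
  have hcop : IsCoprime p q := by
    rw [Int.isCoprime_iff_gcd_eq_one]
    set d : ℤ := (Int.gcd p q : ℤ) with hd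
    obtain ⟨p₁, hp₁⟩ : d ∣ p := Int.gcd_dvd_left p q
    obtain ⟨q₁, hq₁⟩ : d ∣ q := Int.gcd_dvd_right p q
    have hd0 : 0 < d := by
      have h1 : p ≠ 0 ∨ q ≠ 0 := by tauto
      have h2 : 0 < Int.gcd p q := Int.gcd_pos_iff.mpr h1
      rw [hd]
      exact_mod_cast h2
    have hpq1 : ¬(p₁ = 0 ∧ q₁ = 0) := by
      rintro ⟨rfl, rfl⟩; simp at hp₁ hq₁; exact hpq ⟨hp₁, hq₁⟩
    have hv₁ : 0 < A*p₁^2+2*B*p₁*q₁+C*q₁^2 := pd p₁ q₁ hpq1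
    have hle : a ≤ A*p₁^2+2*B*p₁*q₁+C*q₁^2 := hmin _ ⟨p₁, q₁, hpq1, rfl⟩
    have hval : a = d^2 * (A*p₁^2+2*B*p₁*q₁+C*q₁^2) := by
      rw [← hpqa, hp₁, hq₁]; ring
    have : d = 1 := by
      by_contra hne
      have h2d : 2 ≤ d := by omega
      have hlt : (1:ℤ) < d^2 := by nlinarith
      nlinarith [mul_lt_mul_of_pos_right hlt hv₁]
    have : (Int.gcd p q : ℤ) = 1 := by rw [← hd, this]
    exact_mod_cast this
  obtain ⟨u, v, huv⟩ := hcop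
  set b0 : ℤ := A*p*(-v)+B*(p*u+q*(-v))+C*q*u with hb0
  set c0 : ℤ := A*(-v)^2+2*B*(-v)*u+C*u^2 with hc0
  have hM1 : (!![p,-v;q,u]).transpose * !![A,B;B,C] * !![p,-v;q,u] = !![a,b0;b0,c0] := by
    rw [transform]; exact mk_eq _ _ _ _ _ _ _ _ hpqa rfl rfl rfl
  obtain ⟨m, e, he, hbb1, hbb2⟩ :
      ∃ m e : ℤ, (e = 1 ∨ e = -1) ∧ 0 ≤ a*m+b0*e ∧ 2*(a*m+b0*e) ≤ a := by
    have h0 : 0 ≤ b0 % a := Int.emod_nonneg b0 (ne_of_gt ha)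
    have h1 : b0 % a < a := Int.emod_lt_of_pos b0 ha
    have hdef : b0 % a = b0 - a * (b0 / a) := Int.emod_def b0 a
    by_cases h2 : 2*(b0 % a) ≤ a
    · refine ⟨-(b0/a), 1, Or.inl rfl, ?_, ?_⟩ <;> nlinarith
    · refine ⟨b0/a + 1, -1, Or.inr rfl, ?_, ?_⟩ <;> nlinarith
  set b : ℤ := a*m+b0*e with hbdef
  set c : ℤ := a*m^2+2*b0*m*e+c0*e^2 with hcdef
  have hN2 : (!![1,m;0,e]).transpose * !![a,b0;b0,c0] * !![1,m;0,e] = !![a,b;b,c] := by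
    rw [transform]
    exact mk_eq _ _ _ _ _ _ _ _ (by ring) (by first | (rw [hbdef]; ring) | rw [hbdef]) (by first | (rw [hbdef]; ring) | rw [hbdef])
      (by first | (rw [hcdef]; ring) | rw [hcdef])
  set M : Matrix (Fin 2) (Fin 2) ℤ := !![p,-v;q,u] * !![1,m;0,e] with hMdef
  have hM : M.transpose * !![A,B;B,C] * M = !![a,b;b,c] := compose_rel _ _ _ _ _ hM1 hN2
  have hdetM : M.det = e := by
    rw [hMdef, Matrix.det_mul, Matrix.det_fin_two_of, Matrix.det_fin_two_of]
    linear_combination e * huv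
  set r : ℤ := p*m + (-v)*e with hrdef
  set s : ℤ := q*m + u*e with hsdef
  have hMeq : M = !![p, r; q, s] := by
    rw [hMdef, Matrix.mul_fin_two]
    exact mk_eq _ _ _ _ _ _ _ _ (by ring) (by first | (rw [hrdef]; ring) | rw [hrdef]) (by ring) (by first | (rw [hsdef]; ring) | rw [hsdef])
  have hM' := transform A B C p q r s
  rw [← hMeq] at hM'
  have h11 : A*r^2+2*B*r*s+C*s^2 = c := congrFun (congrFun (hM.symm.trans hM') 1) 1 |>.symm
  have hrs : ¬(r = 0 ∧ s = 0) := by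
    rintro ⟨hr0, hs0⟩
    have hde : M.det = p*s - r*q := by rw [hMeq, Matrix.det_fin_two_of]
    rw [hdetM, hr0, hs0] at hde
    rcases he with rfl | rfl <;> simp at hde <;> omega
  exact ⟨a, b, c, ha, hmin c ⟨r, s, hrs, h11⟩, hbb1, hbb2,
    ⟨p, q, hpqa⟩, ⟨r, s, h11⟩, M, hdetM ▸ he, hM⟩

private lemma step (a b c a' b' c' : ℤ) (N : Matrix (Fin 2) (Fin 2) ℤ)
    (ha : 0 < a) (hac : a ≤ c) (hb0 : 0 ≤ b) (hba : 2*b ≤ a)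
    (hac' : a' ≤ c')
    (hdet : N.det = 1 ∨ N.det = -1)
    (h : N.transpose * !![a,b;b,c] * N = !![a',b';b',c']) :
    a ≤ a' ∧ c ≤ c' := by
  obtain ⟨p, q, r, s, rfl⟩ : ∃ p q r s, N = !![p,r;q,s] :=
    ⟨N 0 0, N 1 0, N 0 1, N 1 1, Matrix.eta_fin_two N⟩
  rw [transform] at h
  rw [Matrix.det_fin_two_of] at hdet
  have h00 : a*p^2+2*b*p*q+c*q^2 = a' := congrFun (congrFun h 0) 0
  have h11 : a*r^2+2*b*r*s+c*s^2 = c' := congrFun (congrFun h 1) 1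
  have hpq : ¬(p = 0 ∧ q = 0) := by
    rintro ⟨rfl, rfl⟩
    simp at hdet
  have haa : a ≤ a' := h00 ▸ L1 a b c p q ha hac hb0 hba hpq
  refine ⟨haa, ?_⟩
  by_cases hs : s = 0
  · have hq : q ≠ 0 := by
      rintro rfl
      subst hs
      simp at hdet
    have : c ≤ a' := h00 ▸ L2 a b c p q ha hac hb0 hba hq
    linarith
  · exact h11 ▸ L2 a b c r s ha hac hb0 hba hs

/-- Every positive definite even ℤ-lattice of rank 2 has a unique reduced Gram
matrix `[[a,b],[b,c]]` with `0 < a ≤ c`, `0 ≤ 2b ≤ a`, `a` and `c` even. -/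
theorem rank_two_even_lattice_reduced_form
    (G : Matrix (Fin 2) (Fin 2) ℤ) (hsymm : G.IsSymm)
    (hpos : ∀ v : Fin 2 → ℤ, v ≠ 0 → 0 < dotProduct v (G.mulVec v))
    (heven₀ : Even (G 0 0)) (heven₁ : Even (G 1 1)) :
    ∃! t : ℤ × ℤ × ℤ,
      0 < t.1 ∧ t.1 ≤ t.2.2 ∧ 0 ≤ t.2.1 ∧ 2 * t.2.1 ≤ t.1 ∧
      Even t.1 ∧ Even t.2.2 ∧
      ∃ M : Matrix (Fin 2) (Fin 2) ℤ, (M.det = 1 ∨ M.det = -1) ∧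
        M.transpose * G * M = !![t.1, t.2.1; t.2.1, t.2.2] := by
  have hsym : G 1 0 = G 0 1 := hsymm.apply 0 1
  have hG : G = !![G 0 0, G 0 1; G 0 1, G 1 1] := by
    have h := Matrix.eta_fin_two G
    rw [hsym] at h; exact h
  obtain ⟨A, B, C, hGeq⟩ : ∃ A B C, G = !![A,B;B,C] := ⟨_, _, _, hG⟩
  subst hGeq
  have hevA : Even A := heven₀
  have hevC : Even C := heven₁
  have pd : ∀ x y : ℤ, ¬(x = 0 ∧ y = 0) → 0 < A*x^2+2*B*x*y+C*y^2 := by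
    intro x y hxy
    have hv : ![x,y] ≠ 0 := by
      intro h0
      exact hxy ⟨congrFun h0 0, congrFun h0 1⟩
    have := hpos ![x,y] hv
    rwa [qf_eq] at this
  obtain ⟨a, b, c, ha, hac, hb0, hba, ⟨xa, ya, hxa⟩, ⟨xc, yc, hxc⟩, M, hMdet, hMrel⟩ :=
    exists_reduced A B C pd
  refine ⟨(a, b, c), ⟨ha, hac, hb0, hba, hxa ▸ even_val A B C xa ya hevA hevC,
    hxc ▸ even_val A B C xc yc hevA hevC, M, hMdet, hMrel⟩, ?_⟩
  rintro ⟨a', b', c'⟩ ⟨ha', hac', hb0', hba', _, _, M', hM'det, hM'rel⟩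
  simp only at ha' hac' hb0' hba' hM'rel ⊢
  obtain ⟨K, hKdet, hKrel⟩ := inv_rel _ _ _ hMdet hMrel
  have hNrel := compose_rel _ _ _ _ _ hKrel hM'rel
  have hNdet : (K * M').det = 1 ∨ (K * M').det = -1 := by
    rw [Matrix.det_mul]
    rcases hKdet with h | h <;> rcases hM'det with h' | h' <;> rw [h, h'] <;> norm_num
  obtain ⟨ha1, hc1⟩ := step a b c a' b' c' (K * M') ha hac hb0 hba hac' hNdet hNrel
  obtain ⟨N', hN'det, hN'rel⟩ := inv_rel _ _ _ hNdet hNrel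
  obtain ⟨ha2, hc2⟩ := step a' b' c' a b c N' ha' hac' hb0' hba' hac hN'det hN'rel
  have haa : a = a' := le_antisymm ha1 ha2
  have hcc : c = c' := le_antisymm hc1 hc2
  have hd := congrArg Matrix.det hNrel
  rw [Matrix.det_mul, Matrix.det_mul, Matrix.det_transpose, Matrix.det_fin_two_of,
    Matrix.det_fin_two_of] at hd
  have hbb : b = b' := by
    have hsq : (b-b')*(b+b') = 0 := by
      rcases hNdet with h | h <;> rw [h, ← haa, ← hcc] at hd <;> linear_combination -hd
    rcases mul_eq_zero.mp hsq with h | h <;> omega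
  simp only [Prod.mk.injEq]
  exact ⟨haa.symm, hbb.symm, hcc.symm⟩
end

section
/- Let a, b, c be integers with 0 < a ≤ c, 0 ≤ 2b ≤ a, a even and c even, and let G = [[a, b], [b, c]]. Then there exists an integer matrix M with det M = −1 and Mᵀ G M = G (an orientation-reversing autoisometry of the lattice with Gram matrix G) if and only if a = c, or a = 2b, or b = 0. -/
set_option maxHeartbeats 1000000 in
/-- A reduced positive definite even rank-2 Gram matrix `[[a,b],[b,c]]`
admits an orientation-reversing autoisometry if and only if `a = c`, or `a = 2b`, or `b = 0`. -/
theorem rank_two_even_lattice_orientation_reversing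
    (a b c : ℤ) (ha : 0 < a) (hac : a ≤ c) (hb : 0 ≤ b) (hba : 2 * b ≤ a)
    (hea : Even a) (hec : Even c) :
    (∃ M : Matrix (Fin 2) (Fin 2) ℤ, M.det = -1 ∧
        M.transpose * !![a, b; b, c] * M = !![a, b; b, c]) ↔
      (a = c ∨ a = 2 * b ∨ b = 0) := by
  constructor
  · rintro ⟨M, hdet, hG⟩
    by_contra hcon
    push_neg at hcon
    obtain ⟨h1, h2, h3⟩ := hcon
    have hb0 : 0 < b := lt_of_le_of_ne hb (Ne.symm h3)
    have hba' : 2 * b < a := lt_of_le_of_ne hba (fun h => h2 h.symm)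
    have hac' : a < c := lt_of_le_of_ne hac h1
    set p := M 0 0 with hp
    set q := M 0 1 with hq
    set r := M 1 0 with hr
    set s := M 1 1 with hs
    have hM : M = !![p, q; r, s] := by
      rw [hp, hq, hr, hs]; exact Matrix.etaExpand_eq M |>.symm
    rw [hM] at hdet hG
    rw [show (!![p,q;r,s] : Matrix (Fin 2) (Fin 2) ℤ).transpose = !![p,r;q,s] from
      (Matrix.transposeᵣ_eq _).symm] at hG
    have h0 := congrFun (congrFun hG 0) 0
    have h01 := congrFun (congrFun hG 0) 1
    simp [Matrix.mul_apply, Fin.sum_univ_two] at h0 h01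
    rw [Matrix.det_fin_two_of] at hdet
    -- h0 : quadratic form at (p, r) equals a
    have e00 : a*p^2 + 2*b*p*r + c*r^2 = a := by linarith
    have e01 : a*p*q + b*p*s + b*q*r + c*r*s = b := by linarith
    -- show r = 0
    have hr0 : r = 0 := by
      by_contra hrne
      have hr2 : 1 ≤ r^2 := by
        rcases lt_or_gt_of_ne hrne with h | h
        · nlinarith
        · nlinarith
      rcases eq_or_ne p 0 with hp0 | hpne
      · rw [hp0] at e00
        nlinarith
      · have hp2 : 1 ≤ p^2 := by
          rcases lt_or_gt_of_ne hpne with h | h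
          · nlinarith
          · nlinarith
        nlinarith [sq_nonneg (p + r), mul_nonneg (by linarith : (0:ℤ) ≤ a - b) (by linarith : (0:ℤ) ≤ p^2 - 1),
          mul_nonneg (by linarith : (0:ℤ) ≤ c - b) (by linarith : (0:ℤ) ≤ r^2 - 1),
          mul_nonneg hb (sq_nonneg (p + r))]
    rw [hr0] at e00 e01 hdet
    have hp1 : p^2 = 1 := by
      have : a * p^2 = a * 1 := by linarith
      exact mul_left_cancel₀ (ne_of_gt ha) this
    -- p * s = -1
    have hps : p * s = -1 := by linarith
    have hapq : a * (p * q) = 2 * b := by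
      have hpp : p * p = 1 := by nlinarith
      -- e01 : a*p*q + b*p*s = b, with p*s = -1
      have : a * (p*q) - b = b := by nlinarith
      linarith
    rcases le_or_gt (p * q) 0 with h | h
    · have : a * (p * q) ≤ 0 := mul_nonpos_iff.mpr (Or.inl ⟨ha.le, h⟩)
      linarith
    · have h1 : 1 ≤ p * q := h
      have : a * 1 ≤ a * (p * q) := mul_le_mul_of_nonneg_left h1 ha.le
      linarith
  · rintro (h | h | h)
    · refine ⟨!![0, 1; 1, 0], by simp [Matrix.det_fin_two_of], ?_⟩
      rw [show (!![0,1;1,0] : Matrix (Fin 2) (Fin 2) ℤ).transpose = !![0,1;1,0] from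
        (Matrix.transposeᵣ_eq _).symm, Matrix.mul_fin_two, Matrix.mul_fin_two]
      subst h
      norm_num
    · refine ⟨!![1, 1; 0, -1], by simp [Matrix.det_fin_two_of], ?_⟩
      rw [show (!![1,1;0,-1] : Matrix (Fin 2) (Fin 2) ℤ).transpose = !![1,0;1,-1] from
        (Matrix.transposeᵣ_eq _).symm, Matrix.mul_fin_two, Matrix.mul_fin_two]
      ext i j
      fin_cases i <;> fin_cases j <;> simp <;> omega
    · refine ⟨!![1, 0; 0, -1], by simp [Matrix.det_fin_two_of], ?_⟩
      rw [show (!![1,0;0,-1] : Matrix (Fin 2) (Fin 2) ℤ).transpose = !![1,0;0,-1] from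
        (Matrix.transposeᵣ_eq _).symm, Matrix.mul_fin_two, Matrix.mul_fin_two]
      subst h
      norm_num
end

section
/- The Schur quartic surface in ℙ³(ℂ) defined by x₀(x₀³ − x₁³) − x₂(x₂³ − x₃³) = 0 is smooth and contains exactly 64 lines. -/
open MvPolynomial

/-- The set of lines (2-dimensional linear subspaces of ℂ⁴) contained in the quartic `{F = 0}`. -/
def linesOn (F : MvPolynomial (Fin 4) ℂ) : Set (Submodule ℂ (Fin 4 → ℂ)) :=
  {W | Module.finrank ℂ ↥W = 2 ∧ ∀ v ∈ W, eval v F = 0}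

/-- The quartic surface `{F = 0}` is smooth: `F` and its partial derivatives have no common
zero in ℂ⁴ ∖ {0}. -/
def IsSmoothQuartic (F : MvPolynomial (Fin 4) ℂ) : Prop :=
  ∀ v : Fin 4 → ℂ, v ≠ 0 → ¬ (eval v F = 0 ∧ ∀ i : Fin 4, eval v (pderiv i F) = 0)

/-- The defining polynomial of the Schur quartic `X₆₄`. -/
noncomputable def FSchur : MvPolynomial (Fin 4) ℂ :=
  X 0 * (X 0 ^ 3 - X 1 ^ 3) - X 2 * (X 2 ^ 3 - X 3 ^ 3)

section SchurAux

lemma quartic_coeffs {c0 c1 c2 c3 c4 : ℂ}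
    (h : ∀ s : ℂ, c4*s^4 + c3*s^3 + c2*s^2 + c1*s + c0 = 0) :
    c4 = 0 ∧ c3 = 0 ∧ c2 = 0 ∧ c1 = 0 ∧ c0 = 0 := by
  have h0 := h 0; have h1 := h 1; have h1' := h (-1); have h2 := h 2; have h2' := h (-2)
  refine ⟨by linear_combination (h2 + h2' - 4*h1 - 4*h1' + 6*h0)/24,
    by linear_combination (h2 - h2' - 2*h1 + 2*h1')/12,
    by linear_combination (-h2 - h2' + 16*h1 + 16*h1' - 30*h0)/24,
    by linear_combination (-h2 + h2' + 8*h1 - 8*h1')/12,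
    by linear_combination h0⟩

noncomputable def rt3 : ℂ := (Real.sqrt 3 : ℝ)

lemma rt3_sq : rt3 ^ 2 = 3 := by
  rw [rt3]; norm_cast; rw [Real.sq_sqrt] <;> norm_num

lemma rt3_ne : rt3 ≠ 0 := by
  intro h
  have := rt3_sq
  rw [h] at this; norm_num at this

noncomputable def om : ℂ := (-1 + rt3 * Complex.I) / 2

lemma om_sum : 1 + om + om ^ 2 = 0 := by
  simp only [om]
  linear_combination (-1/4 : ℂ) * rt3_sq + (rt3^2/4) * Complex.I_sq

lemma om_cube : om ^ 3 = 1 := by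
  linear_combination (om - 1) * om_sum

lemma roots3 {z : ℂ} (h : z ^ 3 = 1) : z = 1 ∨ z = om ∨ z = om ^ 2 := by
  have : (z - 1) * (z - om) * (z - om ^ 2) = 0 := by
    linear_combination h + (z - z^2) * om_sum + (z - 1) * om_cube
  rcases mul_eq_zero.1 this with h' | h'
  · rcases mul_eq_zero.1 h' with h'' | h''
    · left; linear_combination h''
    · right; left; linear_combination h''
  · right; right; linear_combination h'

lemma roots4 {z : ℂ} (h : z ^ 4 = 1) :
    z = 1 ∨ z = Complex.I ∨ z = -1 ∨ z = -Complex.I := by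
  have : (z - 1) * (z + 1) * (z - Complex.I) * (z + Complex.I) = 0 := by
    linear_combination h + (1 - z^2) * Complex.I_sq
  rcases mul_eq_zero.1 this with h' | h'
  · rcases mul_eq_zero.1 h' with h'' | h''
    · rcases mul_eq_zero.1 h'' with h3 | h3
      · left; linear_combination h3
      · right; right; left; linear_combination h3
    · right; left; linear_combination h''
  · right; right; right; linear_combination h'

lemma om_ne_zero : om ≠ 0 := by
  intro h
  have := om_cube; rw [h] at this; norm_num at this

lemma om_ne_one : om ≠ 1 := by
  intro h
  have := om_sum; rw [h] at this; norm_num at this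

lemma om_sq_ne_om : om ^ 2 ≠ om := by
  intro h
  have h2 : om * (om - 1) = 0 := by linear_combination h
  rcases mul_eq_zero.1 h2 with h' | h'
  · exact om_ne_zero h'
  · exact om_ne_one (by linear_combination h')

lemma om_sq_ne_one : om ^ 2 ≠ 1 := by
  intro h
  exact om_ne_one (by linear_combination om_cube - om * h)


open MvPolynomial

lemma eval_FSchur (v : Fin 4 → ℂ) :
    eval v FSchur = v 0 ^ 4 - v 0 * v 1 ^ 3 - v 2 ^ 4 + v 2 * v 3 ^ 3 := by
  simp [FSchur]; ring

lemma eval_pderiv_FSchur (v : Fin 4 → ℂ) :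
    eval v (pderiv 0 FSchur) = 4 * v 0 ^ 3 - v 1 ^ 3 ∧
    eval v (pderiv 1 FSchur) = -3 * v 0 * v 1 ^ 2 ∧
    eval v (pderiv 2 FSchur) = -4 * v 2 ^ 3 + v 3 ^ 3 ∧
    eval v (pderiv 3 FSchur) = 3 * v 2 * v 3 ^ 2 := by
  refine ⟨?_, ?_, ?_, ?_⟩ <;>
  · simp [FSchur, pderiv_X]
    ring



lemma range_pair (u v : Fin 4 → ℂ) : Set.range ![u, v] = {u, v} := by
  ext x
  simp [Fin.exists_fin_two]; tauto

lemma span_pair_finrank {u v : Fin 4 → ℂ} (h : LinearIndependent ℂ ![u, v]) :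
    Module.finrank ℂ ↥(Submodule.span ℂ {u, v}) = 2 := by
  have := finrank_span_eq_card h
  rw [range_pair] at this
  simpa using this

lemma eq_span_pair {u v : Fin 4 → ℂ} {W : Submodule ℂ (Fin 4 → ℂ)} (hu : u ∈ W) (hv : v ∈ W)
    (h2 : Module.finrank ℂ ↥W = 2) (hind : LinearIndependent ℂ ![u, v]) :
    W = Submodule.span ℂ {u, v} := by
  refine (Submodule.eq_of_le_of_finrank_le ?_ ?_).symm
  · rw [Submodule.span_le]; rintro x (rfl | rfl) <;> simp [hu, hv]
  · rw [h2, span_pair_finrank hind]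

lemma exists_basis_pair {W : Submodule ℂ (Fin 4 → ℂ)} (h : Module.finrank ℂ ↥W = 2) :
    ∃ u v : Fin 4 → ℂ, u ∈ W ∧ v ∈ W ∧ LinearIndependent ℂ ![u, v] ∧
      W = Submodule.span ℂ {u, v} := by
  let b := Module.finBasisOfFinrankEq ℂ ↥W h
  have hind : LinearIndependent ℂ (fun i : Fin 2 => ((b i : ↥W) : Fin 4 → ℂ)) := by
    have := b.linearIndependent
    exact this.map' W.subtype (Submodule.ker_subtype W)
  have hind2 : LinearIndependent ℂ ![((b 0 : ↥W) : Fin 4 → ℂ), ((b 1 : ↥W) : Fin 4 → ℂ)] := by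
    convert hind using 1
    ext i x
    fin_cases i <;> rfl
  refine ⟨b 0, b 1, (b 0).2, (b 1).2, hind2, ?_⟩
  exact eq_span_pair (b 0).2 (b 1).2 h hind2


lemma solve_system {a b c d : ℂ}
    (h : ∀ s t : ℂ, (a*s+b*t)^4 - (a*s+b*t)*(c*s+d*t)^3 = s^4 - s*t^3) :
    (∃ α ζ : ℂ, α^4 = 1 ∧ ζ^3 = 1 ∧ a = α ∧ b = 0 ∧ c = 0 ∧ d = α*ζ) ∨
    (∃ α η θ : ℂ, α^4 = 1 ∧ η^3 = 1 ∧ θ^3 = 1 ∧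
      a = α/rt3 ∧ b = -α*η*θ/rt3 ∧ c = -2*η^2*α/rt3 ∧ d = -α*θ/rt3) := by
  have key : ∀ s : ℂ,
      (a^4 - a*c^3 - 1)*s^4 + (4*a^3*b - b*c^3 - 3*a*c^2*d)*s^3 +
      (6*a^2*b^2 - 3*b*c^2*d - 3*a*c*d^2)*s^2 +
      (4*a*b^3 - a*d^3 - 3*b*c*d^2 + 1)*s + (b^4 - b*d^3) = 0 := by
    intro s
    linear_combination h s 1
  obtain ⟨e4, e3, e2, e1, e0⟩ := quartic_coeffs key
  have hb0 : b * (b^3 - d^3) = 0 := by linear_combination e0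
  rcases mul_eq_zero.1 hb0 with hb | hbd
  · -- diagonal case
    subst hb
    have had : a * d^3 = 1 := by linear_combination -e1
    have ha : a ≠ 0 := left_ne_zero_of_mul_eq_one had
    have hd : d ≠ 0 := by
      intro h'; rw [h'] at had; simp at had
    have hc : c = 0 := by
      have h2 : a * c^2 * d = 0 := by linear_combination -e3/3
      have := mul_eq_zero.1 h2
      rcases this with h' | h'
      · rcases mul_eq_zero.1 h' with h'' | h''
        · exact absurd h'' ha
        · exact pow_eq_zero_iff (by norm_num) |>.1 h''
      · exact absurd h' hd
    subst hc
    have ha4 : a^4 = 1 := by linear_combination e4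
    have hd3 : d^3 = a^3 := by
      have : a * d^3 = a * a^3 := by linear_combination had - ha4
      exact mul_left_cancel₀ ha this
    refine Or.inl ⟨a, d/a, ha4, ?_, rfl, rfl, rfl, ?_⟩
    · field_simp [hd3]; exact hd3
    · field_simp
  · -- nondiagonal case
    have hd : d ≠ 0 := by
      intro h'
      rw [h'] at hbd
      have hb' : b = 0 := by
        have h3 : b^3 = 0 := by linear_combination hbd
        exact pow_eq_zero_iff (by norm_num) |>.1 h3
      rw [hb', h'] at e1
      norm_num at e1
    obtain ⟨η, hbe, hη⟩ : ∃ η : ℂ, b = η * d ∧ η^3 = 1 := by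
      refine ⟨b/d, (div_mul_cancel₀ b hd).symm, ?_⟩
      field_simp
      linear_combination hbd
    rw [hbe] at e1 e2 e3
    have fact : 3*d^2*((a - η*c) * (2*η^2*a + c)) = 0 := by
      linear_combination e2 - 6*a*c*d^2*hη
    have fact' : (a - η*c) * (2*η^2*a + c) = 0 := by
      have h3d : (3:ℂ)*d^2 ≠ 0 := by simp [hd]
      exact (mul_eq_zero.1 fact).resolve_left h3d
    rcases mul_eq_zero.1 fact' with hac | hc
    · exfalso
      have contra : 3*d^3*(a - η*c) + 1 = 0 := by
        linear_combination e1 - 4*a*d^3*hη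
      rw [hac] at contra; simp at contra
    · have hcv : c = -2*η^2*a := by linear_combination hc
      rw [hcv] at e4 e1
      have h9 : 9*a^4 = 1 := by
        linear_combination e4 - 8*a^4*(η^3+1)*hη
      have h9d : 9*a*d^3 + 1 = 0 := by
        linear_combination e1 - 10*a*d^3*hη
      have ha : a ≠ 0 := by
        intro h'; rw [h'] at h9; simp at h9
      have hd3 : d^3 = -a^3 := by
        have h' : 9*a*d^3 = 9*a*(-a^3) := by linear_combination h9d + h9
        exact mul_left_cancel₀ (show (9:ℂ)*a ≠ 0 by simp [ha]) h'
      obtain ⟨θ, hdθ, hθ⟩ : ∃ θ : ℂ, d = -a*θ ∧ θ^3 = 1 := by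
        refine ⟨-d/a, by field_simp, ?_⟩
        field_simp
        linear_combination -hd3
      have hr := rt3_ne
      refine Or.inr ⟨rt3*a, η, θ, ?_, hη, hθ, ?_, ?_, ?_, ?_⟩
      · have h4 : rt3^4 = 9 := by linear_combination (rt3^2+3)*rt3_sq
        linear_combination a^4 * h4 + h9
      · field_simp
      · rw [hbe, hdθ]; field_simp
      · rw [hcv]; field_simp
      · rw [hdθ]; field_simp


def SYS (a b c d : ℂ) : Prop :=
  ∀ s t : ℂ, (a*s+b*t)^4 - (a*s+b*t)*(c*s+d*t)^3 = s^4 - s*t^3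

lemma diag_SYS {α ζ : ℂ} (hα : α^4 = 1) (hζ : ζ^3 = 1) : SYS α 0 0 (α*ζ) := by
  intro s t
  linear_combination (s^4 - s*t^3*ζ^3) * hα - s*t^3*hζ

lemma key9 {η θ : ℂ} (hη : η^3 = 1) (hθ : θ^3 = 1) (s t : ℂ) :
    (s - η*θ*t)^4 - (s - η*θ*t)*(-2*η^2*s - θ*t)^3 = 9*(s^4 - s*t^3) := by
  linear_combination (8*s^4 - 10*θ^3*s*t^3 + 4*η*θ*s^3*t + η*θ^4*t^4
    - 12*η^2*θ^2*s^2*t^2 + 8*η^3*s^4 - 8*η^4*θ*s^3*t)*hη + (-9*s*t^3)*hθ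

lemma nondiag_SYS {α η θ : ℂ} (hα : α^4 = 1) (hη : η^3 = 1) (hθ : θ^3 = 1) :
    SYS (α/rt3) (-α*η*θ/rt3) (-2*η^2*α/rt3) (-α*θ/rt3) := by
  intro s t
  have h9 : rt3^4 = 9 := by linear_combination (rt3^2+3)*rt3_sq
  have hr := rt3_ne
  calc (α/rt3*s + -α*η*θ/rt3*t)^4 - (α/rt3*s + -α*η*θ/rt3*t)*((-2*η^2*α/rt3)*s + (-α*θ/rt3)*t)^3
      = α^4 / rt3^4 * ((s - η*θ*t)^4 - (s - η*θ*t)*(-2*η^2*s - θ*t)^3) := by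
        field_simp
        ring
    _ = α^4 / 9 * (9*(s^4 - s*t^3)) := by rw [h9, key9 hη hθ]
    _ = s^4 - s*t^3 := by rw [hα]; ring


open MvPolynomial


noncomputable def gLine (a b c d : ℂ) : Submodule ℂ (Fin 4 → ℂ) :=
  Submodule.span ℂ {![1,0,a,c], ![0,1,b,d]}

noncomputable def pLine (g h e f : ℂ) : Submodule ℂ (Fin 4 → ℂ) :=
  Submodule.span ℂ {![g,h,0,0], ![0,0,e,f]}

lemma gLine_indep (a b c d : ℂ) : LinearIndependent ℂ ![![1,0,a,c], ![0,1,b,d]] := by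
  rw [LinearIndependent.pair_iff]
  intro s t h
  constructor
  · have := congrFun h 0; simpa using this
  · have := congrFun h 1; simpa using this

lemma gLine_mem_linesOn {a b c d : ℂ} (h : SYS a b c d) : gLine a b c d ∈ linesOn FSchur := by
  constructor
  · exact span_pair_finrank (gLine_indep a b c d)
  · intro x hx
    rw [gLine, Submodule.mem_span_pair] at hx
    obtain ⟨s, t, rfl⟩ := hx
    rw [eval_FSchur]
    simp only [Pi.add_apply, Pi.smul_apply, Matrix.cons_val_zero, Matrix.cons_val_one,
      Matrix.head_cons, smul_eq_mul, Matrix.cons_val_two, Matrix.cons_val_three,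
      Matrix.tail_cons]
    linear_combination -(h s t)

lemma pLine_indep {g h e f : ℂ} (h1 : ¬(g = 0 ∧ h = 0)) (h2 : ¬(e = 0 ∧ f = 0)) :
    LinearIndependent ℂ ![![g,h,0,0], ![0,0,e,f]] := by
  rw [LinearIndependent.pair_iff]
  intro s t hst
  have c0 := congrFun hst 0
  have c1 := congrFun hst 1
  have c2 := congrFun hst 2
  have c3 := congrFun hst 3
  simp only [Pi.add_apply, Pi.smul_apply, Matrix.cons_val_zero, Matrix.cons_val_one,
    Matrix.head_cons, smul_eq_mul, Matrix.cons_val_two, Matrix.cons_val_three,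
    Matrix.tail_cons, Pi.zero_apply, mul_zero, add_zero, zero_add] at c0 c1 c2 c3
  constructor
  · rcases not_and_or.1 h1 with hg | hh
    · exact (mul_eq_zero.1 c0).resolve_right hg
    · exact (mul_eq_zero.1 c1).resolve_right hh
  · rcases not_and_or.1 h2 with he | hf
    · exact (mul_eq_zero.1 c2).resolve_right he
    · exact (mul_eq_zero.1 c3).resolve_right hf

lemma pLine_mem_linesOn {g h e f : ℂ} (h1 : ¬(g = 0 ∧ h = 0)) (h2 : ¬(e = 0 ∧ f = 0))
    (hq1 : g^4 - g*h^3 = 0) (hq2 : e^4 - e*f^3 = 0) : pLine g h e f ∈ linesOn FSchur := by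
  constructor
  · exact span_pair_finrank (pLine_indep h1 h2)
  · intro x hx
    rw [pLine, Submodule.mem_span_pair] at hx
    obtain ⟨s, t, rfl⟩ := hx
    rw [eval_FSchur]
    simp only [Pi.add_apply, Pi.smul_apply, Matrix.cons_val_zero, Matrix.cons_val_one,
      Matrix.head_cons, smul_eq_mul, Matrix.cons_val_two, Matrix.cons_val_three,
      Matrix.tail_cons, mul_zero, add_zero, zero_add]
    linear_combination s^4*hq1 - t^4*hq2


lemma pow4_ne_zero {α : ℂ} (h : α^4 = 1) : α ≠ 0 := by
  intro hc; rw [hc] at h; norm_num at h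
lemma pow3_ne_zero {α : ℂ} (h : α^3 = 1) : α ≠ 0 := by
  intro hc; rw [hc] at h; norm_num at h

lemma SYS_det {a b c d : ℂ} (h : SYS a b c d) : a*d - b*c ≠ 0 := by
  rcases solve_system h with ⟨α, ζ, hα, hζ, ha, hb, hc, hd⟩ |
    ⟨α, η, θ, hα, hη, hθ, ha, hb, hc, hd⟩
  · rw [ha, hb, hc, hd]
    simp only [zero_mul, mul_zero, sub_zero]
    exact mul_ne_zero (pow4_ne_zero hα) (mul_ne_zero (pow4_ne_zero hα) (pow3_ne_zero hζ))
  · rw [ha, hb, hc, hd]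
    intro hcon
    have hr := rt3_ne
    have h3' : rt3^2*(α^2*θ*(1 + 2*η^3)) = 0 := by
      field_simp at hcon
      linear_combination -rt3^2 * hcon
    have h3 : α^2*θ*(1 + 2*η^3) = 0 :=
      (mul_eq_zero.1 h3').resolve_left (pow_ne_zero _ hr)
    rw [hη] at h3
    norm_num at h3
    rcases h3 with h3 | h3
    · exact pow4_ne_zero hα h3
    · exact pow3_ne_zero hθ h3

noncomputable def r1 : Fin 4 → ℂ := ![0, 1, 1, 1]
noncomputable def r2 : Fin 4 → ℂ := ![1, 1, om, om^2]

lemma root_normalize {g h : ℂ} (hgh : ¬(g = 0 ∧ h = 0)) (hQ : g^4 - g*h^3 = 0) :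
    ∃ (j : Fin 4) (c : ℂ), c ≠ 0 ∧ g = c * r1 j ∧ h = c * r2 j := by
  by_cases hg : g = 0
  · have hh : h ≠ 0 := fun hc => hgh ⟨hg, hc⟩
    exact ⟨0, h, hh, by simp [r1, hg], by simp [r2]⟩
  · have h5 : h^3 = g^3 := by
      have h4 : g*(g^3 - h^3) = 0 := by linear_combination hQ
      have h4' := (mul_eq_zero.1 h4).resolve_left hg
      linear_combination -h4'
    have h3 : (h/g)^3 = 1 := by
      rw [div_pow, div_eq_one_iff_eq (pow_ne_zero _ hg)]
      exact h5
    rcases roots3 h3 with h' | h' | h'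
    · refine ⟨1, g, hg, by simp [r1], ?_⟩
      have : h = g := by field_simp at h'; linear_combination h'
      simp [r2, this]
    · refine ⟨2, g, hg, by simp [r1], ?_⟩
      have : h = g * om := by field_simp at h'; linear_combination h'
      simp [r2, this]
    · refine ⟨3, g, hg, by simp [r1], ?_⟩
      have : h = g * om^2 := by field_simp at h'; linear_combination h'
      simp [r2, this]

lemma span_pair_smul_eq {x y : Fin 4 → ℂ} {c c' : ℂ} (hc : c ≠ 0) (hc' : c' ≠ 0) :
    Submodule.span ℂ {c • x, c' • y} = Submodule.span ℂ {x, y} := by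
  apply le_antisymm
  · rw [Submodule.span_le]
    rintro z hz
    simp only [Set.mem_insert_iff, Set.mem_singleton_iff] at hz
    rcases hz with rfl | rfl
    · exact Submodule.smul_mem _ _ (Submodule.subset_span (by simp))
    · exact Submodule.smul_mem _ _ (Submodule.subset_span (by simp))
  · rw [Submodule.span_le]
    rintro z hz
    simp only [Set.mem_insert_iff, Set.mem_singleton_iff] at hz
    rcases hz with rfl | rfl
    · have hmem : c⁻¹ • (c • z) ∈ Submodule.span ℂ {c • z, c' • y} :=
        Submodule.smul_mem _ _ (Submodule.subset_span (by simp))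
      simpa [smul_smul, inv_mul_cancel₀ hc] using hmem
    · have hmem : c'⁻¹ • (c' • z) ∈ Submodule.span ℂ {c • x, c' • z} :=
        Submodule.smul_mem _ _ (Submodule.subset_span (by simp))
      simpa [smul_smul, inv_mul_cancel₀ hc'] using hmem

lemma pLine_scale {g h e f c c' : ℂ} (hc : c ≠ 0) (hc' : c' ≠ 0) :
    pLine (c*g) (c*h) (c'*e) (c'*f) = pLine g h e f := by
  rw [pLine, pLine]
  have e1 : ![c*g, c*h, 0, 0] = c • ![g,h,(0:ℂ),0] := by
    funext i; fin_cases i <;> simp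
  have e2 : ![(0:ℂ), 0, c'*e, c'*f] = c' • ![(0:ℂ),0,e,f] := by
    funext i; fin_cases i <;> simp
  rw [e1, e2, span_pair_smul_eq hc hc']


open MvPolynomial


lemma classify {W : Submodule ℂ (Fin 4 → ℂ)} (hW : W ∈ linesOn FSchur) :
    (∃ a b c d, SYS a b c d ∧ W = gLine a b c d) ∨
    (∃ g h e f, ¬(g = 0 ∧ h = 0) ∧ ¬(e = 0 ∧ f = 0) ∧
      g^4 - g*h^3 = 0 ∧ e^4 - e*f^3 = 0 ∧ W = pLine g h e f) := by
  obtain ⟨u, v, huW, hvW, hind, hspan⟩ := exists_basis_pair hW.1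
  have heval : ∀ x ∈ W, x 0 ^ 4 - x 0 * x 1 ^ 3 - x 2 ^ 4 + x 2 * x 3 ^ 3 = 0 := by
    intro x hx
    have := hW.2 x hx
    rwa [eval_FSchur] at this
  by_cases hd1 : u 0 * v 1 - u 1 * v 0 = 0
  · -- π₁ degenerate; find w ∈ W, w ≠ 0, w 0 = w 1 = 0
    obtain ⟨σ, τ, hστ, h0, h1⟩ : ∃ σ τ : ℂ, ¬(σ = 0 ∧ τ = 0) ∧
        σ * u 0 + τ * v 0 = 0 ∧ σ * u 1 + τ * v 1 = 0 := by
      by_cases hu0 : u 0 = 0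
      · by_cases hu1 : u 1 = 0
        · exact ⟨1, 0, by simp, by simp [hu0], by simp [hu1]⟩
        · exact ⟨v 1, -u 1, fun hc => hu1 (by simpa using hc.2),
            by linear_combination hd1, by ring⟩
      · exact ⟨v 0, -u 0, fun hc => hu0 (by simpa using hc.2),
          by ring, by linear_combination -hd1⟩
    set w := σ • u + τ • v with hw
    have hwW : w ∈ W := W.add_mem (W.smul_mem _ huW) (W.smul_mem _ hvW)
    have hw0 : w 0 = 0 := by simpa [hw] using h0
    have hw1 : w 1 = 0 := by simpa [hw] using h1
    have hwne : w ≠ 0 := by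
      intro hcon
      exact hστ (LinearIndependent.pair_iff.1 hind σ τ hcon)
    have hef : ¬(w 2 = 0 ∧ w 3 = 0) := by
      rintro ⟨h2, h3⟩
      apply hwne
      funext i
      fin_cases i <;> simp [hw0, hw1, h2, h3]
    have hQw : (w 2)^4 - (w 2)*(w 3)^3 = 0 := by
      have := heval w hwW
      rw [hw0, hw1] at this
      linear_combination -this
    by_cases hd2 : u 2 * v 3 - u 3 * v 2 = 0
    · -- both degenerate: product type line
      obtain ⟨σ', τ', hστ', h2', h3'⟩ : ∃ σ τ : ℂ, ¬(σ = 0 ∧ τ = 0) ∧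
          σ * u 2 + τ * v 2 = 0 ∧ σ * u 3 + τ * v 3 = 0 := by
        by_cases hu2 : u 2 = 0
        · by_cases hu3 : u 3 = 0
          · exact ⟨1, 0, by simp, by simp [hu2], by simp [hu3]⟩
          · exact ⟨v 3, -u 3, fun hc => hu3 (by simpa using hc.2),
              by linear_combination hd2, by ring⟩
        · exact ⟨v 2, -u 2, fun hc => hu2 (by simpa using hc.2),
            by ring, by linear_combination -hd2⟩
      set w' := σ' • u + τ' • v with hw'
      have hw'W : w' ∈ W := W.add_mem (W.smul_mem _ huW) (W.smul_mem _ hvW)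
      have hw'2 : w' 2 = 0 := by simpa [hw'] using h2'
      have hw'3 : w' 3 = 0 := by simpa [hw'] using h3'
      have hw'ne : w' ≠ 0 := by
        intro hcon
        exact hστ' (LinearIndependent.pair_iff.1 hind σ' τ' hcon)
      have hgh : ¬(w' 0 = 0 ∧ w' 1 = 0) := by
        rintro ⟨ha, hb⟩
        apply hw'ne
        funext i
        fin_cases i <;> simp [hw'2, hw'3, ha, hb]
      have hQw' : (w' 0)^4 - (w' 0)*(w' 1)^3 = 0 := by
        have := heval w' hw'W
        rw [hw'2, hw'3] at this
        linear_combination this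
      have hindww : LinearIndependent ℂ ![w', w] := by
        rw [LinearIndependent.pair_iff]
        intro s t hst
        have c0 := congrFun hst 0
        have c1 := congrFun hst 1
        have c2 := congrFun hst 2
        have c3 := congrFun hst 3
        simp only [Pi.add_apply, Pi.smul_apply, smul_eq_mul, Pi.zero_apply, hw0, hw1,
          hw'2, hw'3, mul_zero, add_zero, zero_add] at c0 c1 c2 c3
        constructor
        · rcases not_and_or.1 hgh with hg | hh
          · exact (mul_eq_zero.1 c0).resolve_right hg
          · exact (mul_eq_zero.1 c1).resolve_right hh
        · rcases not_and_or.1 hef with he | hf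
          · exact (mul_eq_zero.1 c2).resolve_right he
          · exact (mul_eq_zero.1 c3).resolve_right hf
      refine Or.inr ⟨w' 0, w' 1, w 2, w 3, hgh, hef, hQw', hQw, ?_⟩
      have hWeq := eq_span_pair hw'W hwW hW.1 hindww
      rw [hWeq, pLine]
      congr 1
      have e1 : w' = ![w' 0, w' 1, 0, 0] := by
        funext i; fin_cases i <;> simp [hw'2, hw'3]
      have e2 : w = ![0, 0, w 2, w 3] := by
        funext i; fin_cases i <;> simp [hw0, hw1]
      rw [← e1, ← e2]
    · -- π₂ nondegenerate but π₁ degenerate: contradiction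
      exfalso
      set δ := u 2 * v 3 - u 3 * v 2 with hδdef
      set u'' := δ⁻¹ • (v 3 • u - u 3 • v) with hu''
      set v'' := δ⁻¹ • (u 2 • v - v 2 • u) with hv''
      have hu''W : u'' ∈ W := W.smul_mem _ (W.sub_mem (W.smul_mem _ huW) (W.smul_mem _ hvW))
      have hv''W : v'' ∈ W := W.smul_mem _ (W.sub_mem (W.smul_mem _ hvW) (W.smul_mem _ huW))
      have hc2 : u'' 2 = 1 := by
        simp only [hu'', Pi.smul_apply, Pi.sub_apply, smul_eq_mul]
        field_simp
        ring
      have hc3 : u'' 3 = 0 := by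
        simp only [hu'', Pi.smul_apply, Pi.sub_apply, smul_eq_mul]
        field_simp
        ring
      have hc2' : v'' 2 = 0 := by
        simp only [hv'', Pi.smul_apply, Pi.sub_apply, smul_eq_mul]
        field_simp
        ring
      have hc3' : v'' 3 = 1 := by
        simp only [hv'', Pi.smul_apply, Pi.sub_apply, smul_eq_mul]
        field_simp
        ring
      have hsys : SYS (u'' 0) (v'' 0) (u'' 1) (v'' 1) := by
        intro s t
        have hm : s • u'' + t • v'' ∈ W := W.add_mem (W.smul_mem _ hu''W) (W.smul_mem _ hv''W)
        have := heval _ hm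
        simp only [Pi.add_apply, Pi.smul_apply, smul_eq_mul, hc2, hc3, hc2', hc3'] at this
        linear_combination this
      have hdet := SYS_det hsys
      have hindw : LinearIndependent ℂ ![u'', v''] := by
        rw [LinearIndependent.pair_iff]
        intro s t hst
        have c2 := congrFun hst 2
        have c3 := congrFun hst 3
        simp only [Pi.add_apply, Pi.smul_apply, smul_eq_mul, Pi.zero_apply, hc2, hc3,
          hc2', hc3', mul_zero, mul_one, add_zero, zero_add] at c2 c3
        exact ⟨c2, c3⟩
      have hWeq := eq_span_pair hu''W hv''W hW.1 hindw
      have hwmem : w ∈ Submodule.span ℂ {u'', v''} := hWeq ▸ hwW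
      rw [Submodule.mem_span_pair] at hwmem
      obtain ⟨s, t, hst⟩ := hwmem
      have c0 := congrFun hst 0
      have c1 := congrFun hst 1
      have c2 := congrFun hst 2
      have c3 := congrFun hst 3
      simp only [Pi.add_apply, Pi.smul_apply, smul_eq_mul, hc2, hc3, hc2', hc3',
        mul_zero, mul_one, add_zero, zero_add, hw0, hw1] at c0 c1 c2 c3
      apply hef
      constructor
      · rw [← c2]
        have : (u'' 0 * v'' 1 - v'' 0 * u'' 1) * s = 0 := by
          linear_combination v'' 1 * c0 - v'' 0 * c1
        have hd : u'' 0 * v'' 1 - v'' 0 * u'' 1 ≠ 0 := by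
          intro hc; apply hdet; linear_combination hc
        exact (mul_eq_zero.1 this).resolve_left hd
      · rw [← c3]
        have : (u'' 0 * v'' 1 - v'' 0 * u'' 1) * t = 0 := by
          linear_combination u'' 0 * c1 - u'' 1 * c0
        have hd : u'' 0 * v'' 1 - v'' 0 * u'' 1 ≠ 0 := by
          intro hc; apply hdet; linear_combination hc
        exact (mul_eq_zero.1 this).resolve_left hd
  · -- π₁ nondegenerate: graph line
    set δ := u 0 * v 1 - u 1 * v 0 with hδdef
    set u' := δ⁻¹ • (v 1 • u - u 1 • v) with hu'
    set v' := δ⁻¹ • (u 0 • v - v 0 • u) with hv'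
    have hu'W : u' ∈ W := W.smul_mem _ (W.sub_mem (W.smul_mem _ huW) (W.smul_mem _ hvW))
    have hv'W : v' ∈ W := W.smul_mem _ (W.sub_mem (W.smul_mem _ hvW) (W.smul_mem _ huW))
    have hc0 : u' 0 = 1 := by
      simp only [hu', Pi.smul_apply, Pi.sub_apply, smul_eq_mul]
      field_simp
      ring
    have hc1 : u' 1 = 0 := by
      simp only [hu', Pi.smul_apply, Pi.sub_apply, smul_eq_mul]
      field_simp
      ring
    have hc0' : v' 0 = 0 := by
      simp only [hv', Pi.smul_apply, Pi.sub_apply, smul_eq_mul]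
      field_simp
      ring
    have hc1' : v' 1 = 1 := by
      simp only [hv', Pi.smul_apply, Pi.sub_apply, smul_eq_mul]
      field_simp
      ring
    have hsys : SYS (u' 2) (v' 2) (u' 3) (v' 3) := by
      intro s t
      have hm : s • u' + t • v' ∈ W := W.add_mem (W.smul_mem _ hu'W) (W.smul_mem _ hv'W)
      have := heval _ hm
      simp only [Pi.add_apply, Pi.smul_apply, smul_eq_mul, hc0, hc1, hc0', hc1'] at this
      linear_combination -this
    have hindw : LinearIndependent ℂ ![u', v'] := by
      rw [LinearIndependent.pair_iff]
      intro s t hst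
      have c0 := congrFun hst 0
      have c1 := congrFun hst 1
      simp only [Pi.add_apply, Pi.smul_apply, smul_eq_mul, Pi.zero_apply, hc0, hc1,
        hc0', hc1', mul_zero, mul_one, add_zero, zero_add] at c0 c1
      exact ⟨c0, c1⟩
    refine Or.inl ⟨u' 2, v' 2, u' 3, v' 3, hsys, ?_⟩
    have hWeq := eq_span_pair hu'W hv'W hW.1 hindw
    rw [hWeq, gLine]
    congr 1
    have e1 : u' = ![1, 0, u' 2, u' 3] := by
      funext i; fin_cases i <;> simp [hc0, hc1]
    have e2 : v' = ![0, 1, v' 2, v' 3] := by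
      funext i; fin_cases i <;> simp [hc0', hc1']
    rw [← e1, ← e2]


noncomputable def r4 : Fin 4 → ℂ := ![1, Complex.I, -1, -Complex.I]
noncomputable def r3 : Fin 3 → ℂ := ![1, om, om^2]
lemma I4 : Complex.I ^ 4 = 1 := by
  rw [show (4:ℕ) = 2*2 from rfl, pow_mul, Complex.I_sq]; norm_num

lemma negI4 : (-Complex.I) ^ 4 = 1 := by
  rw [show ((-Complex.I)^4 : ℂ) = Complex.I^4 by ring, I4]

lemma r4_pow (k : Fin 4) : (r4 k)^4 = 1 := by
  fin_cases k
  · norm_num [r4]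
  · simpa [r4] using I4
  · norm_num [r4]
  · simpa [r4] using negI4
lemma r4_ne (k : Fin 4) : r4 k ≠ 0 := by
  fin_cases k <;> simp [r4, Complex.I_ne_zero]
lemma r3_pow (j : Fin 3) : (r3 j)^3 = 1 := by
  fin_cases j <;> simp [r3, om_cube]
  linear_combination (om^3 + 1) * om_cube
lemma r3_ne (j : Fin 3) : r3 j ≠ 0 := by
  fin_cases j <;> simp [r3, om_ne_zero]
lemma r2_ne (j : Fin 4) : r2 j ≠ 0 := by
  fin_cases j <;> simp [r2, om_ne_zero]
lemma r1r2_ne (j : Fin 4) : ¬(r1 j = 0 ∧ r2 j = 0) := fun hc => r2_ne j hc.2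
lemma Qroot (j : Fin 4) : (r1 j)^4 - (r1 j)*(r2 j)^3 = 0 := by
  fin_cases j <;> simp [r1, r2]
  · linear_combination -om_cube
  · linear_combination -(om^3+1)*om_cube

lemma mem_r4 {α : ℂ} (h : α^4 = 1) : ∃ k : Fin 4, α = r4 k := by
  rcases roots4 h with h | h | h | h
  exacts [⟨0, h⟩, ⟨1, h⟩, ⟨2, h⟩, ⟨3, h⟩]
lemma mem_r3 {ζ : ℂ} (h : ζ^3 = 1) : ∃ j : Fin 3, ζ = r3 j := by
  rcases roots3 h with h | h | h
  exacts [⟨0, h⟩, ⟨1, h⟩, ⟨2, h⟩]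

lemma r4_inj : Function.Injective r4 := by
  intro k k' h
  fin_cases k <;> fin_cases k' <;> first
    | rfl
    | (exfalso; simp only [r4, Matrix.cons_val_zero, Matrix.cons_val_one, Matrix.head_cons,
        Matrix.cons_val_two, Matrix.tail_cons, Matrix.cons_val_three, Matrix.cons_val_fin_one] at h;
       simp [Complex.ext_iff] at h; norm_num at h)
    | (exfalso; simp only [r4, Matrix.cons_val_zero, Matrix.cons_val_one, Matrix.head_cons,
        Matrix.cons_val_two, Matrix.tail_cons, Matrix.cons_val_three, Matrix.cons_val_fin_one] at h;
       simp [Complex.ext_iff] at h)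

lemma om_pow22 : om^(2*2) = om := by linear_combination om * om_cube

lemma r3_inj : Function.Injective r3 := by
  intro j j' h
  fin_cases j <;> fin_cases j' <;>
    simp only [r3, Matrix.cons_val_zero, Matrix.cons_val_one, Matrix.head_cons,
      Matrix.cons_val_two, Matrix.tail_cons] at h
  any_goals rfl
  · exact absurd h.symm om_ne_one
  · exact absurd h.symm om_sq_ne_one
  · exact absurd h om_ne_one
  · exact absurd h.symm om_sq_ne_om
  · exact absurd h om_sq_ne_one
  · exact absurd h om_sq_ne_om

lemma om_ne_negone : om ≠ -1 := by
  intro h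
  have := om_cube
  rw [h] at this; norm_num at this

lemma om_sq_ne_negone : om^2 ≠ -1 := by
  intro h
  have h2 : ((om^2)^3 : ℂ) = -1 := by rw [h]; norm_num
  have h3 : ((om^2)^3 : ℂ) = 1 := by linear_combination (om^3+1)*om_cube
  rw [h3] at h2; norm_num at h2

lemma r3_sq_inj {j j' : Fin 3} (h : (r3 j)^2 = (r3 j')^2) : j = j' := by
  fin_cases j <;> fin_cases j' <;> simp [r3] at h ⊢
  · exact om_sq_ne_one h.symm
  · exact om_ne_one (by linear_combination -h - om*om_cube)
  · rcases h with h | h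
    exacts [om_ne_one h, om_ne_negone h]
  · exact om_sq_ne_om (by linear_combination h + om*om_cube)
  · rcases h with (h | h) | h
    exacts [om_ne_one h, om_ne_negone h, om_sq_ne_negone h]
  · exact om_sq_ne_om (by linear_combination -h + om*om_cube)


lemma root_dir_inj {j j' : Fin 4} {s : ℂ} (h0 : s * r1 j' = r1 j) (h1 : s * r2 j' = r2 j) :
    j = j' := by
  fin_cases j <;> fin_cases j' <;> simp [r1, r2] at h0 h1 ⊢ <;>
    first
      | rfl
      | (exfalso; rw [h0, zero_mul] at h1; exact one_ne_zero h1.symm)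
      | (exfalso; rw [h0] at h1; revert h1; norm_num
         try first
          | exact ⟨om_ne_one, om_ne_negone⟩
          | exact om_ne_one
          | exact fun hh => om_ne_one hh.symm
          | exact om_sq_ne_om
          | exact fun hh => om_sq_ne_om hh.symm
          | exact om_sq_ne_one
          | exact fun hh => om_sq_ne_one hh.symm)


open MvPolynomial



lemma div_rt3_inj {x y : ℂ} (h : x/rt3 = y/rt3) : x = y := by
  have h2 := congrArg (· * rt3) h
  simpa [div_mul_cancel₀, rt3_ne] using h2

-- index type
abbrev Idx := (Fin 4 × Fin 4) ⊕ ((Fin 4 × Fin 3) ⊕ (Fin 4 × Fin 3 × Fin 3))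

noncomputable def Φ : Idx → Submodule ℂ (Fin 4 → ℂ)
  | .inl (j, k) => pLine (r1 j) (r2 j) (r1 k) (r2 k)
  | .inr (.inl (k, j)) => gLine (r4 k) 0 0 (r4 k * r3 j)
  | .inr (.inr (k, j, l)) =>
      gLine (r4 k/rt3) (-(r4 k)*(r3 j)*(r3 l)/rt3) (-2*(r3 j)^2*(r4 k)/rt3) (-(r4 k)*(r3 l)/rt3)

lemma Φ_mem (i : Idx) : Φ i ∈ linesOn FSchur := by
  rcases i with ⟨j, k⟩ | ⟨k, j⟩ | ⟨k, j, l⟩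
  · exact pLine_mem_linesOn (r1r2_ne j) (r1r2_ne k) (Qroot j) (Qroot k)
  · exact gLine_mem_linesOn (diag_SYS (r4_pow k) (r3_pow j))
  · exact gLine_mem_linesOn (nondiag_SYS (r4_pow k) (r3_pow j) (r3_pow l))

lemma lines_sub_range : linesOn FSchur ⊆ Set.range Φ := by
  intro W hW
  rcases classify hW with ⟨a, b, c, d, hsys, rfl⟩ | ⟨g, h, e, f, hgh, hef, hq1, hq2, rfl⟩
  · rcases solve_system hsys with ⟨α, ζ, hα, hζ, ha, hb, hc, hd⟩ |
      ⟨α, η, θ, hα, hη, hθ, ha, hb, hc, hd⟩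
    · obtain ⟨k, rfl⟩ := mem_r4 hα
      obtain ⟨j, rfl⟩ := mem_r3 hζ
      exact ⟨.inr (.inl (k, j)), by rw [Φ, ha, hb, hc, hd]⟩
    · obtain ⟨k, rfl⟩ := mem_r4 hα
      obtain ⟨j, rfl⟩ := mem_r3 hη
      obtain ⟨l, rfl⟩ := mem_r3 hθ
      exact ⟨.inr (.inr (k, j, l)), by rw [Φ, ha, hb, hc, hd]⟩
  · obtain ⟨j, cg, hcg, hg1, hg2⟩ := root_normalize hgh hq1
    obtain ⟨k, ce, hce, he1, he2⟩ := root_normalize hef hq2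
    refine ⟨.inl (j, k), ?_⟩
    show pLine (r1 j) (r2 j) (r1 k) (r2 k) = pLine g h e f
    rw [hg1, hg2, he1, he2, pLine_scale hcg hce]

lemma gLine_inj {a b c d a' b' c' d' : ℂ} (h : gLine a b c d = gLine a' b' c' d') :
    a = a' ∧ b = b' ∧ c = c' ∧ d = d' := by
  have h1 : ![(1:ℂ),0,a,c] ∈ gLine a' b' c' d' := h ▸ Submodule.subset_span (by simp)
  have h2 : ![(0:ℂ),1,b,d] ∈ gLine a' b' c' d' := h ▸ Submodule.subset_span (by simp)
  rw [gLine, Submodule.mem_span_pair] at h1 h2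
  obtain ⟨s, t, hst⟩ := h1
  obtain ⟨s', t', hst'⟩ := h2
  have c0 := congrFun hst 0
  have c1 := congrFun hst 1
  have c2 := congrFun hst 2
  have c3 := congrFun hst 3
  have c0' := congrFun hst' 0
  have c1' := congrFun hst' 1
  have c2' := congrFun hst' 2
  have c3' := congrFun hst' 3
  simp only [Pi.add_apply, Pi.smul_apply, smul_eq_mul, Matrix.cons_val_zero,
    Matrix.cons_val_one, Matrix.head_cons, Matrix.cons_val_two, Matrix.tail_cons,
    Matrix.cons_val_three, mul_zero, mul_one, add_zero, zero_add] at c0 c1 c2 c3 c0' c1' c2' c3'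
  refine ⟨?_, ?_, ?_, ?_⟩
  · linear_combination -c2 + a' * c0 + b' * c1
  · linear_combination -c2' + a' * c0' + b' * c1'
  · linear_combination -c3 + c' * c0 + d' * c1
  · linear_combination -c3' + c' * c0' + d' * c1'
lemma pLine_ne_gLine (j k : Fin 4) (a b c d : ℂ) :
    pLine (r1 j) (r2 j) (r1 k) (r2 k) ≠ gLine a b c d := by
  intro h
  have hx : ![(1:ℂ),0,a,c] ∈ pLine (r1 j) (r2 j) (r1 k) (r2 k) :=
    h ▸ Submodule.subset_span (by simp)
  rw [pLine, Submodule.mem_span_pair] at hx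
  obtain ⟨s, t, hst⟩ := hx
  have c0 := congrFun hst 0
  have c1 := congrFun hst 1
  simp only [Pi.add_apply, Pi.smul_apply, smul_eq_mul, Matrix.cons_val_zero,
    Matrix.cons_val_one, Matrix.head_cons, mul_zero, mul_one, add_zero, zero_add] at c0 c1
  have hs : s = 0 := by
    rcases mul_eq_zero.1 c1 with h' | h'
    · exact h'
    · exact absurd h' (r2_ne j)
  rw [hs, zero_mul] at c0
  exact one_ne_zero c0.symm


lemma pLine_roots_inj {j k j' k' : Fin 4}
    (h : pLine (r1 j) (r2 j) (r1 k) (r2 k) = pLine (r1 j') (r2 j') (r1 k') (r2 k')) :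
    j = j' ∧ k = k' := by
  constructor
  · have hx : ![r1 j, r2 j, 0, 0] ∈ pLine (r1 j') (r2 j') (r1 k') (r2 k') :=
      h ▸ Submodule.subset_span (by simp)
    rw [pLine, Submodule.mem_span_pair] at hx
    obtain ⟨s, t, hst⟩ := hx
    have c0 := congrFun hst 0
    have c1 := congrFun hst 1
    have c2 := congrFun hst 2
    have c3 := congrFun hst 3
    simp only [Pi.add_apply, Pi.smul_apply, smul_eq_mul, Matrix.cons_val_zero,
      Matrix.cons_val_one, Matrix.head_cons, Matrix.cons_val_two, Matrix.tail_cons,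
      Matrix.cons_val_three, mul_zero, mul_one, add_zero, zero_add] at c0 c1 c2 c3
    exact root_dir_inj c0 c1
  · have hx : ![(0:ℂ), 0, r1 k, r2 k] ∈ pLine (r1 j') (r2 j') (r1 k') (r2 k') :=
      h ▸ Submodule.subset_span (by simp)
    rw [pLine, Submodule.mem_span_pair] at hx
    obtain ⟨s, t, hst⟩ := hx
    have c1 := congrFun hst 1
    have c2 := congrFun hst 2
    have c3 := congrFun hst 3
    simp only [Pi.add_apply, Pi.smul_apply, smul_eq_mul, Matrix.cons_val_zero,
      Matrix.cons_val_one, Matrix.head_cons, Matrix.cons_val_two, Matrix.tail_cons,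
      Matrix.cons_val_three, mul_zero, mul_one, add_zero, zero_add] at c1 c2 c3
    exact root_dir_inj c2 c3

lemma Φ_inj : Function.Injective Φ := by
  intro i i' h
  rcases i with ⟨j, k⟩ | ⟨k, j⟩ | ⟨k, j, l⟩ <;> rcases i' with ⟨j', k'⟩ | ⟨k', j'⟩ | ⟨k', j', l'⟩ <;>
    simp only [Φ] at h
  · obtain ⟨hj, hk⟩ := pLine_roots_inj h
    rw [hj, hk]
  · exact absurd h (pLine_ne_gLine _ _ _ _ _ _)
  · exact absurd h (pLine_ne_gLine _ _ _ _ _ _)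
  · exact absurd h.symm (pLine_ne_gLine _ _ _ _ _ _)
  · obtain ⟨ha, _, _, hd⟩ := gLine_inj h
    have hk : k = k' := r4_inj ha
    subst hk
    have hj : r3 j = r3 j' := mul_left_cancel₀ (r4_ne k) hd
    rw [r3_inj hj]
  · obtain ⟨_, _, hc, _⟩ := gLine_inj h
    exfalso
    have h0 : -2*(r3 j')^2*(r4 k') = 0 := (div_eq_zero_iff.1 hc.symm).resolve_right rt3_ne
    rcases mul_eq_zero.1 h0 with h' | h'
    · rcases mul_eq_zero.1 h' with h'' | h''
      · norm_num at h''
      · exact r3_ne j' (pow_eq_zero_iff (by norm_num) |>.1 h'')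
    · exact r4_ne k' h'
  · exact absurd h.symm (pLine_ne_gLine _ _ _ _ _ _)
  · obtain ⟨_, _, hc, _⟩ := gLine_inj h
    exfalso
    have h0 : -2*(r3 j)^2*(r4 k) = 0 := (div_eq_zero_iff.1 hc).resolve_right rt3_ne
    rcases mul_eq_zero.1 h0 with h' | h'
    · rcases mul_eq_zero.1 h' with h'' | h''
      · norm_num at h''
      · exact r3_ne j (pow_eq_zero_iff (by norm_num) |>.1 h'')
    · exact r4_ne k h'
  · obtain ⟨ha, _, hc, hd⟩ := gLine_inj h
    have hk : k = k' := r4_inj (div_rt3_inj ha)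
    subst hk
    have hj : j = j' := by
      apply r3_sq_inj
      have h1 := div_rt3_inj hc
      have h2 : (r3 j)^2 * (r4 k) = (r3 j')^2 * (r4 k) := by linear_combination -h1/2
      exact mul_right_cancel₀ (r4_ne k) h2
    subst hj
    have hl : l = l' := by
      apply r3_inj
      have h1 := div_rt3_inj hd
      have h2 : (-(r4 k)) * (r3 l) = (-(r4 k)) * (r3 l') := by linear_combination h1
      exact mul_left_cancel₀ (neg_ne_zero.2 (r4_ne k)) h2
    rw [hl]

lemma lines_eq_range : linesOn FSchur = Set.range Φ := by
  apply le_antisymm lines_sub_range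
  rintro W ⟨i, rfl⟩
  exact Φ_mem i

lemma lines_count : (linesOn FSchur).ncard = 64 := by
  rw [lines_eq_range, ← Set.image_univ, Set.ncard_image_of_injective _ Φ_inj,
    Set.ncard_univ, Nat.card_eq_fintype_card]
  simp

lemma schur_smooth : IsSmoothQuartic FSchur := by
  intro v hv ⟨h0, hd⟩
  obtain ⟨e0, e1, e2, e3⟩ := eval_pderiv_FSchur v
  rw [hd 0] at e0; rw [hd 1] at e1; rw [hd 2] at e2; rw [hd 3] at e3
  have h01 : v 0 = 0 ∧ v 1 = 0 := by
    have hp : v 0 * v 1^2 = 0 := by linear_combination e1/3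
    rcases mul_eq_zero.1 hp with h' | h'
    · have h1 : v 1 ^ 3 = 0 := by linear_combination e0 + 4*(v 0)^2*h'
      exact ⟨h', pow_eq_zero_iff (by norm_num) |>.1 h1⟩
    · have hv1 : v 1 = 0 := pow_eq_zero_iff (by norm_num) |>.1 h'
      have h1 : v 0 ^ 3 = 0 := by linear_combination -e0/4 + (v 1)^2/4*hv1
      exact ⟨pow_eq_zero_iff (by norm_num) |>.1 h1, hv1⟩
  have h23 : v 2 = 0 ∧ v 3 = 0 := by
    have hp : v 2 * v 3^2 = 0 := by linear_combination -e3/3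
    rcases mul_eq_zero.1 hp with h' | h'
    · have h1 : v 3 ^ 3 = 0 := by linear_combination -e2 + 4*(v 2)^2*h'
      exact ⟨h', pow_eq_zero_iff (by norm_num) |>.1 h1⟩
    · have hv3 : v 3 = 0 := pow_eq_zero_iff (by norm_num) |>.1 h'
      have h1 : v 2 ^ 3 = 0 := by linear_combination e2/4 + (v 3)^2/4*hv3
      exact ⟨pow_eq_zero_iff (by norm_num) |>.1 h1, hv3⟩
  apply hv
  funext i
  fin_cases i
  exacts [h01.1, h01.2, h23.1, h23.2]

end SchurAux

/-- the Schur quartic is smooth and contains exactly 64 lines. -/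
theorem Schur_smooth_and_64_lines :
    IsSmoothQuartic FSchur ∧ (linesOn FSchur).ncard = 64 := by
  exact ⟨schur_smooth, lines_count⟩
end
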